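/- For every natural number n ≥ 1, √(2πn)·n^n·e^{-n}·exp(1/(12n+1)) ≤ n! ≤ √(2πn)·n^n·e^{-n}·exp(1/(12n)). -/

import Mathlib

open Real

open Filter Topology

lemma robbins_log_upper {x : ℝ} (h0 : 0 ≤ x) (h1 : x < 1) :
    Real.log (1+x) - Real.log (1-x) ≤ 2*x + 2*x^3/(3*(1-x^2)) := by
  set F : ℝ → ℝ := fun y => 2*y + 2*y^3/(3*(1-y^2)) - (Real.log (1+y) - Real.log (1-y)) with hF
  have hder : ∀ y ∈ Set.Ico (0:ℝ) 1, HasDerivAt F (4*y^4/(3*(1-y^2)^2)) y := by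
    intro y hy
    obtain ⟨hy0, hy1⟩ := hy
    have hne1 : (1:ℝ) + y ≠ 0 := by linarith
    have hne2 : (1:ℝ) - y ≠ 0 := by linarith
    have hne3 : 3*(1 - y^2) ≠ 0 := by nlinarith
    have d1 : HasDerivAt (fun z : ℝ => Real.log (1+z)) (1/(1+y)) y := by
      simpa using ((hasDerivAt_id y).const_add 1).log hne1
    have d2 : HasDerivAt (fun z : ℝ => Real.log (1-z)) (-1/(1-y)) y := by
      simpa using ((hasDerivAt_id y).const_sub 1).log hne2
    have d3 : HasDerivAt (fun z : ℝ => 2*z^3/(3*(1-z^2)))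
        ((2*(3*y^2) * (3*(1-y^2)) - 2*y^3 * (3*(-(2*y)))) / (3*(1-y^2))^2) y := by
      exact (((hasDerivAt_pow 3 y).const_mul 2).div
        ((((hasDerivAt_pow 2 y).const_sub 1).const_mul 3)) hne3).congr_deriv (by ring_nf)
    have := (((hasDerivAt_id y).const_mul 2).add d3).sub (d1.sub d2)
    refine this.congr_deriv ?_
    have h5 : (0:ℝ) < 1 - y^2 := by nlinarith
    have hne4 : ((3:ℝ) - y ^ 2 * 6 + y ^ 4 * 3) ≠ 0 := by nlinarith [mul_pos h5 h5]
    have hne5 : (1:ℝ) - y^2 ≠ 0 := ne_of_gt h5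
    rw [neg_div]
    field_simp
    ring
  have hcont : ContinuousOn F (Set.Ico 0 1) :=
    fun y hy => (hder y hy).continuousAt.continuousWithinAt
  have hmono : MonotoneOn F (Set.Ico 0 1) := by
    apply monotoneOn_of_hasDerivWithinAt_nonneg (convex_Ico 0 1) hcont
    · intro y hy
      rw [interior_Ico] at hy
      exact (hder y ⟨hy.1.le, hy.2⟩).hasDerivWithinAt
    · intro y hy
      rw [interior_Ico] at hy
      have : (0:ℝ) < 1 - y^2 := by nlinarith [hy.1, hy.2]
      positivity
  have h := hmono (Set.left_mem_Ico.2 one_pos) ⟨h0, h1⟩ h0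
  simp only [hF] at h
  norm_num at h
  linarith

lemma robbins_log_lower {x : ℝ} (h0 : 0 ≤ x) (h1 : x < 1) :
    2*x + 2*x^3/(3-x^2) ≤ Real.log (1+x) - Real.log (1-x) := by
  set G : ℝ → ℝ := fun y => (Real.log (1+y) - Real.log (1-y)) - (2*y + 2*y^3/(3-y^2)) with hG
  have hder : ∀ y ∈ Set.Ico (0:ℝ) 1, HasDerivAt G (8*y^4/((1-y^2)*(3-y^2)^2)) y := by
    intro y hy
    obtain ⟨hy0, hy1⟩ := hy
    have hne1 : (1:ℝ) + y ≠ 0 := by linarith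
    have hne2 : (1:ℝ) - y ≠ 0 := by linarith
    have h5 : (0:ℝ) < 1 - y^2 := by nlinarith
    have hne5 : (1:ℝ) - y^2 ≠ 0 := ne_of_gt h5
    have hne3 : (3:ℝ) - y^2 ≠ 0 := by nlinarith
    have d1 : HasDerivAt (fun z : ℝ => Real.log (1+z)) (1/(1+y)) y := by
      simpa using ((hasDerivAt_id y).const_add 1).log hne1
    have d2 : HasDerivAt (fun z : ℝ => Real.log (1-z)) (-1/(1-y)) y := by
      simpa using ((hasDerivAt_id y).const_sub 1).log hne2
    have d3 : HasDerivAt (fun z : ℝ => 2*z^3/(3-z^2))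
        ((2*(3*y^2) * (3-y^2) - 2*y^3 * (-(2*y))) / (3-y^2)^2) y := by
      exact ((hasDerivAt_pow 3 y).const_mul 2).div ((hasDerivAt_pow 2 y).const_sub 3) hne3
        |>.congr_deriv (by ring_nf)
    have := (d1.sub d2).sub (((hasDerivAt_id y).const_mul 2).add d3)
    refine this.congr_deriv ?_
    rw [neg_div]
    field_simp
    ring
  have hcont : ContinuousOn G (Set.Ico 0 1) :=
    fun y hy => (hder y hy).continuousAt.continuousWithinAt
  have hmono : MonotoneOn G (Set.Ico 0 1) := by
    apply monotoneOn_of_hasDerivWithinAt_nonneg (convex_Ico 0 1) hcont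
    · intro y hy
      rw [interior_Ico] at hy
      exact (hder y ⟨hy.1.le, hy.2⟩).hasDerivWithinAt
    · intro y hy
      rw [interior_Ico] at hy
      have h5 : (0:ℝ) < 1 - y^2 := by nlinarith [hy.1, hy.2]
      have h6 : (0:ℝ) < 3 - y^2 := by nlinarith [hy.1, hy.2]
      positivity
  have h := hmono (Set.left_mem_Ico.2 one_pos) ⟨h0, h1⟩ h0
  simp only [hG] at h
  norm_num at h
  linarith

noncomputable def robbinsD (n : ℕ) : ℝ :=
  Real.log n.factorial - ((n:ℝ) + 1/2) * Real.log n + n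

lemma robbinsD_diff (n : ℕ) (hn : 1 ≤ n) :
    robbinsD n - robbinsD (n+1)
      = ((n:ℝ) + 1/2) * (Real.log ((n:ℝ)+1) - Real.log n) - 1 := by
  have hn0 : (0:ℝ) < n := by exact_mod_cast hn
  have hf : ((n+1).factorial : ℝ) = ((n:ℝ)+1) * (n.factorial : ℝ) := by
    push_cast [Nat.factorial_succ]; ring
  unfold robbinsD
  rw [hf, Real.log_mul (by positivity) (by exact_mod_cast (Nat.factorial_pos n).ne')]
  push_cast
  ring

lemma robbins_logdiff_sub (n : ℕ) (hn : 1 ≤ n) :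
    Real.log ((n:ℝ)+1) - Real.log n
      = Real.log (1 + 1/(2*(n:ℝ)+1)) - Real.log (1 - 1/(2*(n:ℝ)+1)) := by
  have hx : (1:ℝ) ≤ (n:ℝ) := by exact_mod_cast hn
  set x : ℝ := (n:ℝ) with hxdef
  have h0 : (0:ℝ) < x := by linarith
  have h21 : (0:ℝ) < 2*x+1 := by linarith
  have e1 : 1 + 1/(2*x+1) = (2*x+2)/(2*x+1) := by field_simp; ring
  have e2 : 1 - 1/(2*x+1) = (2*x)/(2*x+1) := by field_simp; ring
  rw [e1, e2, Real.log_div (by positivity) (by positivity),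
    Real.log_div (by positivity) (by positivity),
    show (2*x+2) = 2*(x+1) by ring,
    Real.log_mul two_ne_zero (by positivity),
    Real.log_mul two_ne_zero (by positivity)]
  ring

lemma robbins_diff_le (n : ℕ) (hn : 1 ≤ n) :
    robbinsD n - robbinsD (n+1) ≤ 1/(12*(n:ℝ)) - 1/(12*((n:ℝ)+1)) := by
  have hx : (1:ℝ) ≤ (n:ℝ) := by exact_mod_cast hn
  set x : ℝ := (n:ℝ) with hxdef
  have h0 : (0:ℝ) < x := by linarith
  have h21 : (0:ℝ) < 2*x+1 := by linarith
  set t : ℝ := 1/(2*x+1) with htdef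
  have ht0 : 0 ≤ t := by positivity
  have ht3 : t ≤ 1/3 := by rw [htdef]; rw [div_le_div_iff₀ h21 (by norm_num)]; linarith
  have ht1 : t < 1 := by linarith
  have hA := robbins_log_upper ht0 ht1
  have ht2 : (0:ℝ) < 1 - t^2 := by nlinarith
  have key : (x + 1/2) * (2*t + 2*t^3/(3*(1-t^2))) - 1 = 1/(12*x) - 1/(12*(x+1)) := by
    rw [htdef]
    have h1 : ((2*x+1):ℝ) ≠ 0 := ne_of_gt h21
    have h2 : (3:ℝ)*(1-(1/(2*x+1))^2) ≠ 0 := by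
      have : (0:ℝ) < 1 - (1/(2*x+1))^2 := by rw [← htdef]; exact ht2
      positivity
    field_simp
    have hP : (x * 12 + x ^ 2 * 84 + x ^ 3 * 216 + x ^ 4 * 240 + x ^ 5 * 96 : ℝ) ≠ 0 :=
      ne_of_gt (by nlinarith [pow_pos h0 2, pow_pos h0 3, pow_pos h0 4, pow_pos h0 5])
    have hQ : ((x*2+1)^2 - 1 : ℝ) ≠ 0 := by nlinarith
    field_simp
    ring
  rw [robbinsD_diff n hn, robbins_logdiff_sub n hn, ← hxdef, ← htdef, ← key]
  have := mul_le_mul_of_nonneg_left hA (by linarith : (0:ℝ) ≤ x + 1/2)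
  linarith

lemma robbins_le_diff (n : ℕ) (hn : 1 ≤ n) :
    1/(12*(n:ℝ)+1) - 1/(12*((n:ℝ)+1)+1) ≤ robbinsD n - robbinsD (n+1) := by
  have hx : (1:ℝ) ≤ (n:ℝ) := by exact_mod_cast hn
  set x : ℝ := (n:ℝ) with hxdef
  have h0 : (0:ℝ) < x := by linarith
  have h21 : (0:ℝ) < 2*x+1 := by linarith
  set t : ℝ := 1/(2*x+1) with htdef
  have ht0 : 0 ≤ t := by positivity
  have ht3 : t ≤ 1/3 := by rw [htdef]; rw [div_le_div_iff₀ h21 (by norm_num)]; linarith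
  have ht1 : t < 1 := by linarith
  have hB := robbins_log_lower ht0 ht1
  have key : (x + 1/2) * (2*t + 2*t^3/(3-t^2)) - 1 = 1/(12*x^2+12*x+2) := by
    rw [htdef]
    have h1 : ((2*x+1):ℝ) ≠ 0 := ne_of_gt h21
    have h2 : (3:ℝ) - (1/(2*x+1))^2 ≠ 0 := by
      have ht2 : t^2 ≤ 1 := by nlinarith
      have : (0:ℝ) < 3 - (1/(2*x+1))^2 := by rw [← htdef]; linarith
      positivity
    field_simp
    have hP : (2 + x * 24 + x ^ 2 * 108 + x ^ 3 * 232 + x ^ 4 * 240 + x ^ 5 * 96 : ℝ) ≠ 0 :=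
      ne_of_gt (by nlinarith [pow_pos h0 2, pow_pos h0 3, pow_pos h0 4, pow_pos h0 5])
    have hQ : ((x*2+1)^2*3 - 1 : ℝ) ≠ 0 := by nlinarith
    field_simp
    ring
  have hstep : 1/(12*x+1) - 1/(12*(x+1)+1) ≤ 1/(12*x^2+12*x+2) := by
    rw [div_sub_div _ _ (by positivity : (12*x+1:ℝ) ≠ 0) (by positivity : (12*(x+1)+1:ℝ) ≠ 0),
      div_le_div_iff₀ (by positivity) (by positivity)]
    nlinarith
  rw [robbinsD_diff n hn, robbins_logdiff_sub n hn, ← hxdef, ← htdef]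
  have := mul_le_mul_of_nonneg_left hB (by linarith : (0:ℝ) ≤ x + 1/2)
  linarith [key]

lemma robbinsD_eq_stirling (n : ℕ) (hn : 1 ≤ n) :
    robbinsD n = Real.log (Stirling.stirlingSeq n) + Real.log 2 / 2 := by
  have hn0 : (0:ℝ) < n := by exact_mod_cast hn
  rw [Stirling.log_stirlingSeq_formula, robbinsD,
    Real.log_mul two_ne_zero (ne_of_gt hn0),
    Real.log_div (ne_of_gt hn0) (Real.exp_ne_zero 1), Real.log_exp]
  ring

lemma robbinsD_tendsto :
    Tendsto (fun k : ℕ => robbinsD (k+1)) atTop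
      (𝓝 (Real.log (Real.sqrt π) + Real.log 2 / 2)) := by
  have h1 : Tendsto (fun k : ℕ => Stirling.stirlingSeq (k+1)) atTop (𝓝 (Real.sqrt π)) :=
    Stirling.tendsto_stirlingSeq_sqrt_pi.comp (tendsto_add_atTop_nat 1)
  have hpos : Real.sqrt π ≠ 0 := ne_of_gt (Real.sqrt_pos.2 Real.pi_pos)
  have h2 : Tendsto (fun k : ℕ => Real.log (Stirling.stirlingSeq (k+1))) atTop
      (𝓝 (Real.log (Real.sqrt π))) :=
    ((Real.continuousAt_log hpos).tendsto).comp h1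
  have heq : (fun k : ℕ => robbinsD (k+1))
      = fun k : ℕ => Real.log (Stirling.stirlingSeq (k+1)) + Real.log 2 / 2 :=
    funext fun k => robbinsD_eq_stirling (k+1) (Nat.succ_le_succ (Nat.zero_le _))
  rw [heq]
  exact h2.add_const _

lemma tendsto_aux (c : ℝ) (hc : 0 < c) :
    Tendsto (fun k : ℕ => 1/(c*((k:ℝ)+1))) atTop (𝓝 0) := by
  have h1 : Tendsto (fun k : ℕ => c*((k:ℝ)+1)) atTop atTop :=
    Tendsto.const_mul_atTop hc (tendsto_atTop_add_const_right _ 1 tendsto_natCast_atTop_atTop)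
  simpa only [one_div, Pi.inv_def] using h1.inv_tendsto_atTop

lemma robbinsD_le (n : ℕ) (hn : 1 ≤ n) :
    robbinsD n ≤ Real.log (Real.sqrt π) + Real.log 2 / 2 + 1/(12*(n:ℝ)) := by
  set L := Real.log (Real.sqrt π) + Real.log 2 / 2 with hL
  set A : ℕ → ℝ := fun k => robbinsD (k+1) - 1/(12*((k:ℝ)+1)) with hA
  have hmono : Monotone A := by
    apply monotone_nat_of_le_succ
    intro k
    have := robbins_diff_le (k+1) (Nat.succ_le_succ (Nat.zero_le _))
    simp only [hA]
    push_cast at this ⊢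
    linarith
  have htend : Tendsto A atTop (𝓝 L) := by
    have h0 : Tendsto (fun k : ℕ => 1/(12*((k:ℝ)+1))) atTop (𝓝 0) :=
      tendsto_aux 12 (by norm_num)
    have h2 := robbinsD_tendsto.sub h0
    rw [sub_zero] at h2
    exact h2
  obtain ⟨k, rfl⟩ : ∃ k, n = k + 1 := ⟨n - 1, by omega⟩
  have := hmono.ge_of_tendsto htend k
  simp only [hA] at this
  push_cast
  push_cast at this
  linarith

lemma le_robbinsD (n : ℕ) (hn : 1 ≤ n) :
    Real.log (Real.sqrt π) + Real.log 2 / 2 + 1/(12*(n:ℝ)+1) ≤ robbinsD n := by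
  set L := Real.log (Real.sqrt π) + Real.log 2 / 2 with hL
  set B : ℕ → ℝ := fun k => robbinsD (k+1) - 1/(12*((k:ℝ)+1)+1) with hB
  have hanti : Antitone B := by
    apply antitone_nat_of_succ_le
    intro k
    have := robbins_le_diff (k+1) (Nat.succ_le_succ (Nat.zero_le _))
    simp only [hB]
    push_cast at this ⊢
    linarith
  have htend : Tendsto B atTop (𝓝 L) := by
    have h0 : Tendsto (fun k : ℕ => 1/(12*((k:ℝ)+1)+1)) atTop (𝓝 0) := by
      have h1 : Tendsto (fun k : ℕ => 12*((k:ℝ)+1) + 1) atTop atTop := by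
        apply tendsto_atTop_add_const_right
        apply Tendsto.const_mul_atTop (by norm_num : (0:ℝ) < 12)
        exact tendsto_atTop_add_const_right _ 1 tendsto_natCast_atTop_atTop
      simpa only [one_div, Pi.inv_def] using h1.inv_tendsto_atTop
    have h2 := robbinsD_tendsto.sub h0
    rw [sub_zero] at h2
    exact h2
  obtain ⟨k, rfl⟩ : ∃ k, n = k + 1 := ⟨n - 1, by omega⟩
  have := hanti.le_of_tendsto htend k
  simp only [hB] at this
  push_cast
  push_cast at this
  linarith

/-- Robbins' sharpening of Stirling's formula: for every natural number `n ≥ 1`,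
`√(2πn)·n^n·e^{-n}·exp(1/(12n+1)) ≤ n! ≤ √(2πn)·n^n·e^{-n}·exp(1/(12n))`. -/
theorem robbins_factorial_bounds (n : ℕ) (hn : 1 ≤ n) :
    Real.sqrt (2 * π * n) * (n : ℝ) ^ n * Real.exp (-(n : ℝ)) *
        Real.exp (1 / (12 * (n : ℝ) + 1)) ≤ (n.factorial : ℝ) ∧
      (n.factorial : ℝ) ≤
        Real.sqrt (2 * π * n) * (n : ℝ) ^ n * Real.exp (-(n : ℝ)) *
          Real.exp (1 / (12 * (n : ℝ))) := by
  have hx : (1:ℝ) ≤ (n:ℝ) := by exact_mod_cast hn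
  have hx0 : (0:ℝ) < n := by linarith
  have hfac : (0:ℝ) < n.factorial := by exact_mod_cast n.factorial_pos
  have hs : (0:ℝ) < Real.sqrt (2 * π * n) := Real.sqrt_pos.2 (by positivity)
  have hxn : (0:ℝ) < (n:ℝ) ^ n := by positivity
  have hlogs : Real.log (Real.sqrt (2 * π * (n:ℝ)))
      = (Real.log 2 + Real.log π + Real.log n) / 2 := by
    rw [Real.log_sqrt (by positivity),
      Real.log_mul (by positivity) (ne_of_gt hx0),
      Real.log_mul two_ne_zero (ne_of_gt Real.pi_pos)]
  have hsp : Real.log (Real.sqrt π) = Real.log π / 2 := Real.log_sqrt Real.pi_pos.le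
  constructor
  · have hd := le_robbinsD n hn
    rw [← Real.exp_log hfac, ← Real.exp_log (x := Real.sqrt (2 * π * n) * (n : ℝ) ^ n *
      Real.exp (-(n : ℝ)) * Real.exp (1 / (12 * (n : ℝ) + 1))) (by positivity)]
    rw [Real.log_mul (by positivity) (Real.exp_ne_zero _),
      Real.log_mul (by positivity) (Real.exp_ne_zero _),
      Real.log_mul (ne_of_gt hs) (ne_of_gt hxn),
      Real.log_exp, Real.log_exp, Real.log_pow, hlogs]
    apply Real.exp_le_exp.2
    unfold robbinsD at hd
    rw [hsp] at hd
    push_cast at hd ⊢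
    linarith
  · have hd := robbinsD_le n hn
    rw [← Real.exp_log hfac, ← Real.exp_log (x := Real.sqrt (2 * π * n) * (n : ℝ) ^ n *
      Real.exp (-(n : ℝ)) * Real.exp (1 / (12 * (n : ℝ)))) (by positivity)]
    rw [Real.log_mul (by positivity) (Real.exp_ne_zero _),
      Real.log_mul (by positivity) (Real.exp_ne_zero _),
      Real.log_mul (ne_of_gt hs) (ne_of_gt hxn),
      Real.log_exp, Real.log_exp, Real.log_pow, hlogs]
    apply Real.exp_le_exp.2
    unfold robbinsD at hd
    rw [hsp] at hd
    push_cast at hd ⊢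
    linarith
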